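/- Let Ω be a set, Ω* the free monoid on Ω, H ⊆ Ω*×Ω* a finite symmetric set, ρ = ⟨H⟩, and K = max{|p| : (p,q) ∈ H}. Let a, u, b, v ∈ Ω* and let (c₁,d₁,t₁;…;cₙ,dₙ,tₙ) be an H-sequence with au = c₁t₁, dᵢtᵢ = c_{i+1}t_{i+1} for 1 ≤ i ≤ n−1, and dₙtₙ = bv, which is irreducible with respect to (a,u;b,v). Set c_{n+1} = b and t_{n+1} = v. Then either (u = ε or t₁ = ε, and |u| ≤ max(|b|, K)), or there exist an index 1 ≤ i ≤ n with t_{i+1} = ε (so that (au, c_{i+1}) ∈ ρ) and a nonempty word x ∈ Ω* with |x| ≤ max(|b|, K) which is a common suffix of u, t₁, …, tᵢ, such that the sequence (c₁,d₁,t₁x⁻¹;…;c_{i−1},d_{i−1},t_{i−1}x⁻¹) satisfies aux⁻¹ = c₁t₁x⁻¹, d₁t₁x⁻¹ = c₂t₂x⁻¹, …, d_{i−1}t_{i−1}x⁻¹ = cᵢtᵢx⁻¹, and is an H-sequence irreducible with respect to (a, ux⁻¹; cᵢ, tᵢx⁻¹). -/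

import Mathlib

/-- A right congruence on a monoid `S`: an equivalence relation compatible with
right multiplication. -/
def IsRightCong {S : Type*} [Monoid S] (ρ : Set (S × S)) : Prop :=
  Equivalence (fun a b : S => (a, b) ∈ ρ) ∧ ∀ u v t : S, (u, v) ∈ ρ → (u * t, v * t) ∈ ρ

/-- The right congruence generated by a set `H` of pairs: the smallest right
congruence containing `H`. -/
def rcGen {S : Type*} [Monoid S] (H : Set (S × S)) : Set (S × S) :=
  ⋂₀ {ρ : Set (S × S) | IsRightCong ρ ∧ H ⊆ ρ}

/-- `MSuffix x u` means the word `x` is a suffix of the word `u` in the free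
monoid, i.e. `u = u' * x` for some `u'`. -/
def MSuffix {Ω : Type*} (x u : FreeMonoid Ω) : Prop := ∃ u' : FreeMonoid Ω, u = u' * x

private lemma drop_of_suffix {α : Type*} {l s : List α} (h : s <:+ l) :
    l.drop (l.length - s.length) = s := by
  obtain ⟨w, rfl⟩ := h
  rw [List.length_append, Nat.add_sub_cancel, List.drop_left]

private lemma msuffix_iff {Ω : Type*} (x u : FreeMonoid Ω) :
    MSuffix x u ↔ x.toList <:+ u.toList := by
  constructor
  · rintro ⟨w, rfl⟩; exact ⟨w.toList, rfl⟩
  · rintro ⟨w, hw⟩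
    refine ⟨FreeMonoid.ofList w, FreeMonoid.toList.injective ?_⟩
    show u.toList = w ++ x.toList
    exact hw.symm

private lemma toList_ne_nil {Ω : Type*} {x : FreeMonoid Ω} (h : x ≠ 1) :
    x.toList ≠ [] := by
  intro hnil
  exact h (FreeMonoid.toList.injective hnil)

private lemma ne_one_of_toList {Ω : Type*} {x : FreeMonoid Ω} (h : x.toList ≠ []) :
    x ≠ 1 := fun h1 => h (by rw [h1]; rfl)

theorem tech_lemma (Ω : Type*) (H : Set (FreeMonoid Ω × FreeMonoid Ω))
    (hfin : H.Finite)
    (hsym : ∀ p : FreeMonoid Ω × FreeMonoid Ω, p ∈ H → (p.2, p.1) ∈ H)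
    (K : ℕ)
    (hK : K = sSup ((fun p : FreeMonoid Ω × FreeMonoid Ω => p.1.length) '' H))
    (a u b v : FreeMonoid Ω) (n : ℕ) (c d t : ℕ → FreeMonoid Ω)
    (hd0 : d 0 = a) (ht0 : t 0 = u) (hcn : c (n + 1) = b) (htn : t (n + 1) = v)
    (hmem : ∀ i : ℕ, 1 ≤ i → i ≤ n → (c i, d i) ∈ H)
    (heq : ∀ i : ℕ, i ≤ n → d i * t i = c (i + 1) * t (i + 1))
    (hirr : ¬ ∃ x : FreeMonoid Ω, x ≠ 1 ∧ ∀ i : ℕ, i ≤ n + 1 → MSuffix x (t i)) :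
    ((u = 1 ∨ t 1 = 1) ∧ u.length ≤ max b.length K) ∨
    (∃ i : ℕ, 1 ≤ i ∧ i ≤ n ∧ t (i + 1) = 1 ∧ (a * u, c (i + 1)) ∈ rcGen H ∧
      ∃ x : FreeMonoid Ω, ∃ t' : ℕ → FreeMonoid Ω,
        x ≠ 1 ∧ x.length ≤ max b.length K ∧
        (∀ j : ℕ, j ≤ i → t j = t' j * x) ∧
        (∀ j : ℕ, j < i → d j * t' j = c (j + 1) * t' (j + 1)) ∧
        ¬ ∃ y : FreeMonoid Ω, y ≠ 1 ∧ ∀ j : ℕ, j ≤ i → MSuffix y (t' j)) := by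
  classical
  have hKle : ∀ p ∈ H, (Prod.fst p).length ≤ K := by
    intro p hp
    rw [hK]
    exact le_csSup ((hfin.image _).bddAbove) (Set.mem_image_of_mem _ hp)
  by_cases hcase : u = 1 ∨ t 1 = 1
  · left
    refine ⟨hcase, ?_⟩
    rcases hcase with h1 | h1
    · rw [h1]; exact Nat.zero_le _
    · -- t 1 = 1, so a * u = c 1
      have h0 := heq 0 (Nat.zero_le n)
      rw [hd0, ht0, h1, mul_one] at h0
      rcases Nat.eq_zero_or_pos n with hn | hn
      · -- n = 0 : c 1 = b
        subst hn
        rw [hcn] at h0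
        have : a.length + u.length = b.length := by
          rw [← FreeMonoid.length_mul, h0]
        have : u.length ≤ b.length := by omega
        exact le_trans this (le_max_left _ _)
      · have hc1 : (c 1).length ≤ K := hKle (c 1, d 1) (hmem 1 le_rfl hn)
        have : a.length + u.length = (c 1).length := by
          rw [← FreeMonoid.length_mul, h0]
        have : u.length ≤ K := by omega
        exact le_trans this (le_max_right _ _)
  · right
    push_neg at hcase
    obtain ⟨hu, ht1⟩ := hcase
    -- last letter of u
    obtain ⟨u0, ω, hu0⟩ : ∃ l e, u.toList = l ++ [e] := by
      rcases List.eq_nil_or_concat u.toList with h | h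
      · exact absurd h (toList_ne_nil hu)
      · obtain ⟨l, e, h⟩ := h
        exact ⟨l, e, by rw [h, List.concat_eq_append]⟩
    have hulast : u.toList.getLast? = some ω := by
      rw [hu0, List.getLast?_append]; rfl
    -- every t j, as long as no earlier t is empty, ends with ω
    have hlast : ∀ j, j ≤ n + 1 → (∀ k, k ≤ j → t k ≠ 1) →
        (t j).toList.getLast? = some ω := by
      intro j
      induction j with
      | zero => intro _ _; rw [ht0]; exact hulast
      | succ j ih =>
        intro hj hne
        have hjn : j ≤ n := by omega
        have hprev : (t j).toList.getLast? = some ω :=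
          ih (by omega) (fun k hk => hne k (by omega))
        have hstep := congrArg (fun w : FreeMonoid Ω => w.toList.getLast?) (heq j hjn)
        simp only [FreeMonoid.toList_mul, List.getLast?_append, hprev] at hstep
        have hne1 : (t (j + 1)).toList ≠ [] := toList_ne_nil (hne (j + 1) le_rfl)
        rw [List.getLast?_eq_getLast hne1] at hstep
        have hωeq : ω = (t (j + 1)).toList.getLast hne1 := by simpa using hstep
        rw [List.getLast?_eq_getLast hne1, ← hωeq]
    -- there is an empty t j with 1 ≤ j ≤ n + 1
    have hex : ∃ j, 1 ≤ j ∧ j ≤ n + 1 ∧ t j = 1 := by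
      by_contra hno
      push_neg at hno
      have hne_all : ∀ k, k ≤ n + 1 → t k ≠ 1 := by
        intro k hk
        rcases Nat.eq_zero_or_pos k with h | h
        · subst h; rw [ht0]; exact hu
        · exact hno k h hk
      refine hirr ⟨FreeMonoid.ofList [ω], ?_, ?_⟩
      · exact ne_one_of_toList (by simp)
      · intro j hj
        have := hlast j hj (fun k hk => hne_all k (le_trans hk hj))
        rw [msuffix_iff]
        show [ω] <:+ (t j).toList
        exact ⟨(t j).toList.dropLast, List.dropLast_append_getLast? ω this⟩
    obtain ⟨m, hm_def⟩ : ∃ m, m = Nat.find hex := ⟨_, rfl⟩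
    have hm1 : 1 ≤ m := hm_def ▸ (Nat.find_spec hex).1
    have hmn : m ≤ n + 1 := hm_def ▸ (Nat.find_spec hex).2.1
    have hmt : t m = 1 := by rw [hm_def]; exact (Nat.find_spec hex).2.2
    have hmin : ∀ k, k < m → ¬(1 ≤ k ∧ k ≤ n + 1 ∧ t k = 1) := by
      intro k hk
      rw [hm_def] at hk
      exact Nat.find_min hex hk
    have hm2 : 2 ≤ m := by
      rcases Nat.lt_or_ge m 2 with h | h
      · have : m = 1 := by omega
        rw [this] at hmt
        exact absurd hmt ht1
      · exact h
    obtain ⟨i, hi_def⟩ : ∃ i, i = m - 1 := ⟨_, rfl⟩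
    have hisucc : i + 1 = m := by omega
    have hi1 : 1 ≤ i := by omega
    have hin : i ≤ n := by omega
    have hti1 : t (i + 1) = 1 := by rw [hisucc]; exact hmt
    have ht_ne : ∀ j, j ≤ i → t j ≠ 1 := by
      intro j hj
      rcases Nat.eq_zero_or_pos j with h | h
      · subst h; rw [ht0]; exact hu
      · intro h1
        exact hmin j (by omega) ⟨h, by omega, h1⟩
    have hlast' : ∀ j, j ≤ i → (t j).toList.getLast? = some ω := by
      intro j hj
      exact hlast j (by omega) (fun k hk => ht_ne k (le_trans hk hj))
    -- ρ-relation
    have hrc : (a * u, c (i + 1)) ∈ rcGen H := by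
      apply Set.mem_sInter.mpr
      rintro ρ ⟨⟨hequiv, hmul⟩, hsub⟩
      have key : ∀ j, j ≤ i → (a * u, d j * t j) ∈ ρ := by
        intro j
        induction j with
        | zero => intro _; rw [hd0, ht0]; exact hequiv.refl _
        | succ j ih =>
          intro hj
          have hprev := ih (by omega)
          have he : d j * t j = c (j + 1) * t (j + 1) := heq j (by omega)
          have hH : (c (j + 1), d (j + 1)) ∈ H := hmem (j + 1) (by omega) (by omega)
          have : (c (j + 1) * t (j + 1), d (j + 1) * t (j + 1)) ∈ ρ :=
            hmul _ _ _ (hsub hH)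
          exact hequiv.trans (he ▸ hprev) this
      have := key i le_rfl
      rwa [heq i hin, hti1, mul_one] at this
    -- longest common suffix
    have hPex : ∃ k, ∀ j, j ≤ i → (u.toList.drop k) <:+ (t j).toList :=
      ⟨u.toList.length, fun j _ => by rw [List.drop_length]; exact List.nil_suffix⟩
    have hPone : ∀ j, j ≤ i → (u.toList.drop (u.toList.length - 1)) <:+ (t j).toList := by
      intro j hj
      have hdrop : u.toList.drop (u.toList.length - 1) = [ω] := by
        rw [hu0]
        have : (u0 ++ [ω]).length - 1 = u0.length := by
          rw [List.length_append]; simp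
        rw [this, List.drop_left]
      rw [hdrop]
      exact ⟨(t j).toList.dropLast, List.dropLast_append_getLast? ω (hlast' j hj)⟩
    obtain ⟨km, hkm_def⟩ : ∃ k, k = Nat.find hPex := ⟨_, rfl⟩
    have hPspec : ∀ j, j ≤ i → (u.toList.drop km) <:+ (t j).toList := by
      rw [hkm_def]; exact Nat.find_spec hPex
    have hkmle : km ≤ u.toList.length - 1 := by
      rw [hkm_def]; exact Nat.find_le hPone
    have hPmin : ∀ k, k < km → ¬(∀ j, j ≤ i → (u.toList.drop k) <:+ (t j).toList) := by
      intro k hk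
      rw [hkm_def] at hk
      exact Nat.find_min hPex hk
    have hulen : 1 ≤ u.toList.length := by
      rw [hu0, List.length_append]; simp
    have hkmlt : km < u.toList.length := by omega
    have hxLlen : (u.toList.drop km).length = u.toList.length - km := List.length_drop
    have hxLne : u.toList.drop km ≠ [] := by
      intro h
      have := congrArg List.length h
      rw [hxLlen] at this
      simp at this
      omega
    -- the factorization t j = t' j * x
    have hfact : ∀ j, j ≤ i → t j = FreeMonoid.ofList
        ((t j).toList.take ((t j).toList.length - (u.toList.drop km).length))
        * FreeMonoid.ofList (u.toList.drop km) := by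
      intro j hj
      obtain ⟨w, hw⟩ := hPspec j hj
      apply FreeMonoid.toList.injective
      show (t j).toList
        = (t j).toList.take ((t j).toList.length - (u.toList.drop km).length)
          ++ u.toList.drop km
      have hlen : (t j).toList.length - (u.toList.drop km).length = w.length := by
        rw [← hw, List.length_append]; omega
      rw [hlen, ← hw, List.take_left]
    refine ⟨i, hi1, hin, hti1, hrc, FreeMonoid.ofList (u.toList.drop km),
      fun j => FreeMonoid.ofList
        ((t j).toList.take ((t j).toList.length - (u.toList.drop km).length)),
      ne_one_of_toList hxLne, ?_, hfact, ?_, ?_⟩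
    · -- length bound
      have hsuf : u.toList.drop km <:+ (t i).toList := hPspec i le_rfl
      have h1 : (u.toList.drop km).length ≤ (t i).toList.length := hsuf.length_le
      have h2 : (d i * t i) = c (i + 1) := by
        rw [heq i hin, hti1, mul_one]
      have h3 : (d i).length + (t i).length = (c (i + 1)).length := by
        rw [← FreeMonoid.length_mul, h2]
      have hxlen : (FreeMonoid.ofList (u.toList.drop km)).length
          = (u.toList.drop km).length := rfl
      have htlen : (t i).toList.length = (t i).length := rfl
      rcases Nat.lt_or_ge i n with hlt | hge
      · have hc : (c (i + 1)).length ≤ K :=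
          hKle (c (i + 1), d (i + 1)) (hmem (i + 1) (by omega) (by omega))
        rw [hxlen]
        refine le_trans ?_ (le_max_right b.length K)
        omega
      · have : i = n := by omega
        subst this
        rw [hcn] at h3
        rw [hxlen]
        refine le_trans ?_ (le_max_left b.length K)
        omega
    · -- equations after cancellation
      intro j hj
      have he : d j * t j = c (j + 1) * t (j + 1) := heq j (by omega)
      rw [hfact j (by omega), hfact (j + 1) (by omega), ← mul_assoc, ← mul_assoc] at he
      exact mul_right_cancel he
    · -- irreducibility of truncated sequence
      rintro ⟨y, hy1, hys⟩
      have hyne : y.toList ≠ [] := toList_ne_nil hy1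
      have hcommon : ∀ j, j ≤ i → (y.toList ++ u.toList.drop km) <:+ (t j).toList := by
        intro j hj
        obtain ⟨w, hw⟩ := hys j hj
        have hw' : FreeMonoid.ofList
            ((t j).toList.take ((t j).toList.length - (u.toList.drop km).length))
            = w * y := hw
        have htj : t j = w * y * FreeMonoid.ofList (u.toList.drop km) := by
          rw [hfact j hj, hw']
        have : (t j).toList = w.toList ++ (y.toList ++ u.toList.drop km) := by
          rw [htj]
          show (w.toList ++ y.toList) ++ u.toList.drop km = _
          rw [List.append_assoc]
        exact ⟨w.toList, this.symm⟩
      have hsufu : (y.toList ++ u.toList.drop km) <:+ u.toList := by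
        have := hcommon 0 (Nat.zero_le i)
        rwa [ht0] at this
      have hlenle : y.toList.length + (u.toList.drop km).length ≤ u.toList.length := by
        have := hsufu.length_le
        rwa [List.length_append] at this
      have hdropk' : u.toList.drop
          (u.toList.length - (y.toList.length + (u.toList.drop km).length))
          = y.toList ++ u.toList.drop km := by
        have := drop_of_suffix hsufu
        rwa [List.length_append] at this
      have hyl : 1 ≤ y.toList.length := by
        cases h : y.toList with
        | nil => exact absurd h hyne
        | cons _ _ => simp [h]
      have hk'lt : u.toList.length - (y.toList.length + (u.toList.drop km).length) < km := by
        omega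
      exact hPmin _ hk'lt (fun j hj => by rw [hdropk']; exact hcommon j hj)
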